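/- If in both arms of a screening trial the conditional death probability given late-stage diagnosis strictly exceeds that given early-stage diagnosis, and all joint probabilities pC00, pC01, pC11, pC02, pC12 and pS00, pS01, pS11, pS02, pS12 are strictly positive (each arm summing to 1), then the asymptotic correlation ρ between Ŝ and M̂ satisfies 0 < ρ ≤ 1. -/

import Mathlib

set_option maxHeartbeats 1600000

theorem stmt_15 (pC00 pC01 pC11 pC02 pC12 pS00 pS01 pS11 pS02 pS12 c : ℝ)
    (hC : 0 < pC00 ∧ 0 < pC01 ∧ 0 < pC11 ∧ 0 < pC02 ∧ 0 < pC12)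
    (hS : 0 < pS00 ∧ 0 < pS01 ∧ 0 < pS11 ∧ 0 < pS02 ∧ 0 < pS12)
    (hCsum : pC00 + pC01 + pC11 + pC02 + pC12 = 1)
    (hSsum : pS00 + pS01 + pS11 + pS02 + pS12 = 1)
    (hCcond : pC11 / (pC11 + pC01) < pC12 / (pC12 + pC02))
    (hScond : pS11 / (pS11 + pS01) < pS12 / (pS12 + pS02))
    (hc : 0 < c) :
    let a : Fin 3 → ℝ := ![pC11, pC02, pC12]
    let b : Fin 3 → ℝ := ![pS11, pS02, pS12]
    let SigC : Matrix (Fin 3) (Fin 3) ℝ :=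
      fun i j => if i = j then a i * (1 - a i) else -(a i * a j)
    let SigS : Matrix (Fin 3) (Fin 3) ℝ :=
      fun i j => c * (if i = j then b i * (1 - b i) else -(b i * b j))
    let Sig : Matrix (Fin 3 ⊕ Fin 3) (Fin 3 ⊕ Fin 3) ℝ := Matrix.fromBlocks SigC 0 0 SigS
    let r : ℝ := -(pS02 + pS12) / (pC02 + pC12) ^ 2
    let s : ℝ := 1 / (pC02 + pC12)
    let t : ℝ := -(pS11 + pS12) / (pC11 + pC12) ^ 2
    let u : ℝ := 1 / (pC11 + pC12)
    let v1 : Fin 3 ⊕ Fin 3 → ℝ := Sum.elim ![0, r, r] ![0, s, s]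
    let v2 : Fin 3 ⊕ Fin 3 → ℝ := Sum.elim ![t, 0, t] ![u, 0, u]
    let Sig11 : ℝ := dotProduct v1 (Sig.mulVec v1)
    let Sig22 : ℝ := dotProduct v2 (Sig.mulVec v2)
    let Sig12 : ℝ := dotProduct v1 (Sig.mulVec v2)
    let ρ : ℝ := Sig12 / Real.sqrt (Sig11 * Sig22)
    0 < ρ ∧ ρ ≤ 1 := by
  obtain ⟨hC00, hC01, hC11, hC02, hC12⟩ := hC
  obtain ⟨hS00, hS01, hS11, hS02, hS12⟩ := hS
  intro a b SigC SigS Sig r s t u v1 v2 Sig11 Sig22 Sig12 ρ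
  have hP1 : 0 < pC02 + pC12 := by linarith
  have hP2 : 0 < pC11 + pC12 := by linarith
  have hQ1 : 0 < pS02 + pS12 := by linarith
  have hQ2 : 0 < pS11 + pS12 := by linarith
  have hr : r < 0 := div_neg_of_neg_of_pos (by linarith) (by positivity)
  have hsp : 0 < s := by positivity
  have ht : t < 0 := div_neg_of_neg_of_pos (by linarith) (by positivity)
  have hup : 0 < u := by positivity
  -- closed forms
  have h11 : Sig11 = r^2 * ((pC02+pC12)*(1-(pC02+pC12)))
      + c * s^2 * ((pS02+pS12)*(1-(pS02+pS12))) := by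
    simp only [Sig11, Sig, SigC, SigS, v1, a, b, dotProduct, Matrix.mulVec,
      Matrix.fromBlocks, Fintype.sum_sum_type, Fin.sum_univ_three, Sum.elim_inl, Sum.elim_inr,
      Matrix.of_apply, Matrix.cons_val_zero, Matrix.cons_val_one, Matrix.head_cons,
      Matrix.cons_val_two, Matrix.tail_cons, Matrix.zero_apply]
    norm_num [Fin.ext_iff]
    ring
  have h22 : Sig22 = t^2 * ((pC11+pC12)*(1-(pC11+pC12)))
      + c * u^2 * ((pS11+pS12)*(1-(pS11+pS12))) := by
    simp only [Sig22, Sig, SigC, SigS, v2, a, b, dotProduct, Matrix.mulVec,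
      Matrix.fromBlocks, Fintype.sum_sum_type, Fin.sum_univ_three, Sum.elim_inl, Sum.elim_inr,
      Matrix.of_apply, Matrix.cons_val_zero, Matrix.cons_val_one, Matrix.head_cons,
      Matrix.cons_val_two, Matrix.tail_cons, Matrix.zero_apply]
    norm_num [Fin.ext_iff]
    ring
  have h12 : Sig12 = r * t * (pC12 - (pC02+pC12)*(pC11+pC12))
      + c * (s*u) * (pS12 - (pS02+pS12)*(pS11+pS12)) := by
    simp only [Sig12, Sig, SigC, SigS, v1, v2, a, b, dotProduct, Matrix.mulVec,
      Matrix.fromBlocks, Fintype.sum_sum_type, Fin.sum_univ_three, Sum.elim_inl, Sum.elim_inr,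
      Matrix.of_apply, Matrix.cons_val_zero, Matrix.cons_val_one, Matrix.head_cons,
      Matrix.cons_val_two, Matrix.tail_cons, Matrix.zero_apply]
    norm_num [Fin.ext_iff]
    ring
  -- positivity facts
  have hCc : pC11 * pC02 < pC12 * pC01 := by
    rw [div_lt_div_iff₀ (by linarith) (by linarith)] at hCcond
    nlinarith [hCcond]
  have hSc : pS11 * pS02 < pS12 * pS01 := by
    rw [div_lt_div_iff₀ (by linarith) (by linarith)] at hScond
    nlinarith [hScond]
  have hXC : 0 < pC12 - (pC02+pC12)*(pC11+pC12) := by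
    have e : pC12 - (pC02+pC12)*(pC11+pC12)
        = pC12*pC00 + (pC12*pC01 - pC11*pC02) := by linear_combination -pC12 * hCsum
    rw [e]
    have := mul_pos hC12 hC00
    linarith
  have hXS : 0 < pS12 - (pS02+pS12)*(pS11+pS12) := by
    have e : pS12 - (pS02+pS12)*(pS11+pS12)
        = pS12*pS00 + (pS12*pS01 - pS11*pS02) := by linear_combination -pS12 * hSsum
    rw [e]
    have := mul_pos hS12 hS00
    linarith
  have h12pos : 0 < Sig12 := by
    rw [h12]
    have h1 : 0 < r * t := mul_pos_of_neg_of_neg hr ht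
    have h2 : 0 < s * u := mul_pos hsp hup
    positivity
  have h11pos : 0 < Sig11 := by
    rw [h11]
    have h1 : (0:ℝ) < 1 - (pC02+pC12) := by linarith
    have h2 : (0:ℝ) < 1 - (pS02+pS12) := by linarith
    have hr' : r ≠ 0 := ne_of_lt hr
    positivity
  have h22pos : 0 < Sig22 := by
    rw [h22]
    have h1 : (0:ℝ) < 1 - (pC11+pC12) := by linarith
    have h2 : (0:ℝ) < 1 - (pS11+pS12) := by linarith
    have ht' : t ≠ 0 := ne_of_lt ht
    positivity
  -- positive semidefiniteness of the quadratic form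
  have Qpos : ∀ w : Fin 3 ⊕ Fin 3 → ℝ, 0 ≤ dotProduct w (Sig.mulVec w) := by
    intro w
    have e : dotProduct w (Sig.mulVec w) =
        (pC11 * (w (Sum.inl 0))^2 + pC02 * (w (Sum.inl 1))^2 + pC12 * (w (Sum.inl 2))^2
          - (pC11 * w (Sum.inl 0) + pC02 * w (Sum.inl 1) + pC12 * w (Sum.inl 2))^2)
        + c * (pS11 * (w (Sum.inr 0))^2 + pS02 * (w (Sum.inr 1))^2 + pS12 * (w (Sum.inr 2))^2
          - (pS11 * w (Sum.inr 0) + pS02 * w (Sum.inr 1) + pS12 * w (Sum.inr 2))^2) := by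
      simp only [Sig, SigC, SigS, a, b, dotProduct, Matrix.mulVec,
        Matrix.fromBlocks, Fintype.sum_sum_type, Fin.sum_univ_three, Sum.elim_inl, Sum.elim_inr,
        Matrix.of_apply, Matrix.cons_val_zero, Matrix.cons_val_one, Matrix.head_cons,
        Matrix.cons_val_two, Matrix.tail_cons, Matrix.zero_apply]
      norm_num [Fin.ext_iff]
      ring
    rw [e]
    set x0 := w (Sum.inl 0); set x1 := w (Sum.inl 1); set x2 := w (Sum.inl 2)
    set y0 := w (Sum.inr 0); set y1 := w (Sum.inr 1); set y2 := w (Sum.inr 2)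
    have hCkey : 0 ≤ pC11 * x0^2 + pC02 * x1^2 + pC12 * x2^2
        - (pC11 * x0 + pC02 * x1 + pC12 * x2)^2 := by
      have e2 : pC11 * x0^2 + pC02 * x1^2 + pC12 * x2^2
          - (pC11 * x0 + pC02 * x1 + pC12 * x2)^2
          = (pC00 + pC01) * (pC11 * x0^2 + pC02 * x1^2 + pC12 * x2^2)
            + (pC11*pC02*(x0-x1)^2 + pC11*pC12*(x0-x2)^2 + pC02*pC12*(x1-x2)^2) := by
        linear_combination (-(pC11 * x0^2 + pC02 * x1^2 + pC12 * x2^2)) * hCsum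
      rw [e2]; positivity
    have hSkey : 0 ≤ pS11 * y0^2 + pS02 * y1^2 + pS12 * y2^2
        - (pS11 * y0 + pS02 * y1 + pS12 * y2)^2 := by
      have e2 : pS11 * y0^2 + pS02 * y1^2 + pS12 * y2^2
          - (pS11 * y0 + pS02 * y1 + pS12 * y2)^2
          = (pS00 + pS01) * (pS11 * y0^2 + pS02 * y1^2 + pS12 * y2^2)
            + (pS11*pS02*(y0-y1)^2 + pS11*pS12*(y0-y2)^2 + pS02*pS12*(y1-y2)^2) := by
        linear_combination (-(pS11 * y0^2 + pS02 * y1^2 + pS12 * y2^2)) * hSsum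
      rw [e2]; positivity
    have := mul_nonneg hc.le hSkey
    linarith
  -- bilinear expansion
  have key : ∀ L : ℝ, dotProduct (fun i => v1 i + L * v2 i)
      (Sig.mulVec (fun i => v1 i + L * v2 i)) = Sig11 + 2 * L * Sig12 + L^2 * Sig22 := by
    intro L
    simp only [Sig11, Sig22, Sig12, Sig, SigC, SigS, v1, v2, a, b, dotProduct,
      Matrix.mulVec, Matrix.fromBlocks, Fintype.sum_sum_type, Fin.sum_univ_three,
      Sum.elim_inl, Sum.elim_inr, Matrix.of_apply, Matrix.cons_val_zero, Matrix.cons_val_one,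
      Matrix.head_cons, Matrix.cons_val_two, Matrix.tail_cons, Matrix.zero_apply]
    norm_num [Fin.ext_iff]
    ring
  have hdisc : discrim Sig22 (2 * Sig12) Sig11 ≤ 0 := by
    apply discrim_le_zero
    intro L
    have := Qpos (fun i => v1 i + L * v2 i)
    rw [key L] at this
    linarith
  have hCS : Sig12^2 ≤ Sig11 * Sig22 := by
    rw [discrim] at hdisc
    nlinarith [hdisc, sq_nonneg Sig12]
  have hsq : 0 < Real.sqrt (Sig11 * Sig22) := Real.sqrt_pos.mpr (mul_pos h11pos h22pos)
  constructor
  · exact div_pos h12pos hsq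
  · rw [div_le_one hsq]
    exact (Real.le_sqrt h12pos.le (mul_pos h11pos h22pos).le).mpr hCS
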